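/- Let R ≥ 2, g(ρ) = (1+ρ)^{−a}, Z₀(ρ) = ρ/(1+ρ²) and Z₁(ρ) = 1/(1+ρ²). For k ∈ {0,1} define φ^k(ρ) = Z_k(ρ) ∫_ρ^{4R} (1/(r Z_k(r)²)) (∫₀^r g(s) Z_k(s) s ds) dr on (0, 4R]. Then φ^k satisfies ℒ_k[φ^k] + g = 0 on (0, 4R) and φ^k(4R) = 0, and there is a constant C depending only on a such that: if 1 < a < 2 then |φ⁰(ρ)| ≤ C (1+ρ)^{−1} R² for all ρ ∈ (0, 4R], and if 0 < a < 2 then |φ¹(ρ)| ≤ C (1+ρ)^{−2} R⁴ for all ρ ∈ (0, 4R]. -/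

import Mathlib

noncomputable section

open Real Set MeasureTheory

/-- The 1-corrotational harmonic map profile `w(ρ) = π - 2 arctan ρ`. -/
def wfun (ρ : ℝ) : ℝ := Real.pi - 2 * Real.arctan ρ

/-- The mode-`k` operator `ℒ_k[φ](ρ) = φ'' + φ'/ρ − (k² + 2k cos w + cos 2w) φ/ρ²`. -/
def Lmode (k : ℤ) (φ : ℝ → ℝ) (ρ : ℝ) : ℝ :=
  deriv (deriv φ) ρ + deriv φ ρ / ρ
    - ((k : ℝ) ^ 2 + 2 * (k : ℝ) * Real.cos (wfun ρ) + Real.cos (2 * wfun ρ)) * φ ρ / ρ ^ 2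

/-- The kernel element `Z₀(ρ) = ρ/(1+ρ²)` of `ℒ₀`. -/
def Z0 (ρ : ℝ) : ℝ := ρ / (1 + ρ ^ 2)

/-- The kernel element `Z₁(ρ) = 1/(1+ρ²)` of `ℒ₁`. -/
def Z1 (ρ : ℝ) : ℝ := 1 / (1 + ρ ^ 2)

/-- The right-hand side `g(ρ) = (1+ρ)^{-a}`. -/
def gfun (a ρ : ℝ) : ℝ := (1 + ρ) ^ (-a)

/-- The variation-of-parameters solution built from a kernel element `Z`:
`φ(ρ) = Z(ρ) ∫_ρ^{4R} (1/(r Z(r)²)) (∫₀^r g(s) Z(s) s ds) dr`. -/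
def phiVar (Z : ℝ → ℝ) (a R ρ : ℝ) : ℝ :=
  Z ρ * ∫ r in ρ..(4 * R),
    (1 / (r * Z r ^ 2)) * ∫ s in (0 : ℝ)..r, gfun a s * Z s * s

namespace Barrier

/-! ### Auxiliary definitions -/

def Ifun (Z : ℝ → ℝ) (a r : ℝ) : ℝ := ∫ s in (0 : ℝ)..r, gfun a s * Z s * s

def Ffun (Z : ℝ → ℝ) (a r : ℝ) : ℝ := (1 / (r * Z r ^ 2)) * Ifun Z a r

def ufun (Z : ℝ → ℝ) (a R x : ℝ) : ℝ := ∫ r in x..(4 * R), Ffun Z a r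

lemma phiVar_eq (Z : ℝ → ℝ) (a R ρ : ℝ) : phiVar Z a R ρ = Z ρ * ufun Z a R ρ := rfl

/-! ### Trigonometric identities -/

lemma cos_wfun (ρ : ℝ) : Real.cos (wfun ρ) = (ρ ^ 2 - 1) / (1 + ρ ^ 2) := by
  have hne : (1 : ℝ) + ρ ^ 2 ≠ 0 := by positivity
  have hsq : Real.sqrt (1 + ρ ^ 2) ^ 2 = 1 + ρ ^ 2 := Real.sq_sqrt (by positivity)
  have hsne : Real.sqrt (1 + ρ ^ 2) ≠ 0 := by
    intro h
    rw [h] at hsq; simp at hsq; nlinarith [sq_nonneg ρ]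
  rw [wfun, show Real.pi - 2 * Real.arctan ρ = Real.pi - 2 * Real.arctan ρ from rfl]
  rw [Real.cos_pi_sub, Real.cos_two_mul, Real.cos_arctan]
  rw [div_pow, one_pow, hsq]
  field_simp
  ring

lemma cos_two_wfun (ρ : ℝ) :
    Real.cos (2 * wfun ρ) = 2 * ((ρ ^ 2 - 1) / (1 + ρ ^ 2)) ^ 2 - 1 := by
  rw [Real.cos_two_mul, cos_wfun]

/-! ### Continuity and FTC facts -/

lemma gfun_contOn {a : ℝ} : ContinuousOn (gfun a) (Ioi (-1 : ℝ)) := by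
  intro x hx
  have hx' : (-1 : ℝ) < x := hx
  have h1 : ContinuousAt (fun y : ℝ => y ^ (-a)) (1 + x) :=
    Real.continuousAt_rpow_const _ _ (Or.inl (by nlinarith))
  have h2 : ContinuousAt (fun s : ℝ => (1 + s) ^ (-a)) x :=
    h1.comp (by fun_prop)
  exact h2.continuousWithinAt

lemma integrand_contOn {a : ℝ} {Z : ℝ → ℝ} (hZc : Continuous Z) :
    ContinuousOn (fun s => gfun a s * Z s * s) (Ioi (-1 : ℝ)) :=
  (gfun_contOn.mul hZc.continuousOn).mul continuousOn_id

lemma integrand_intInt {a : ℝ} {Z : ℝ → ℝ} (hZc : Continuous Z) {c r : ℝ}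
    (hc : -1 < c) (hr : -1 < r) :
    IntervalIntegrable (fun s => gfun a s * Z s * s) volume c r := by
  apply ((integrand_contOn hZc).mono ?_).intervalIntegrable
  exact Set.OrdConnected.uIcc_subset Set.ordConnected_Ioi hc hr

lemma Ifun_hasDerivAt {a : ℝ} {Z : ℝ → ℝ} (hZc : Continuous Z) {r : ℝ} (hr : -1 < r) :
    HasDerivAt (Ifun Z a) (gfun a r * Z r * r) r := by
  have hop : IsOpen (Ioi (-1 : ℝ)) := isOpen_Ioi
  have hc := integrand_contOn (a := a) hZc
  exact intervalIntegral.integral_hasDerivAt_right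
    (integrand_intInt hZc (by norm_num) hr)
    (hc.stronglyMeasurableAtFilter hop r hr)
    (hc.continuousAt (hop.mem_nhds hr))

lemma Ifun_contOn {a : ℝ} {Z : ℝ → ℝ} (hZc : Continuous Z) :
    ContinuousOn (Ifun Z a) (Ioi (-1 : ℝ)) := fun x hx =>
  ((Ifun_hasDerivAt hZc hx).continuousAt).continuousWithinAt

lemma Ffun_contOn {a : ℝ} {Z : ℝ → ℝ} (hZc : Continuous Z)
    (hZne : ∀ x, 0 < x → Z x ≠ 0) :
    ContinuousOn (Ffun Z a) (Ioi (0 : ℝ)) := by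
  apply ContinuousOn.mul
  · apply ContinuousOn.div continuousOn_const
    · exact continuousOn_id.mul (hZc.continuousOn.pow 2)
    · intro x hx
      exact mul_ne_zero (ne_of_gt hx) (pow_ne_zero 2 (hZne x hx))
  · exact (Ifun_contOn hZc).mono (fun x hx => by
      simp only [mem_Ioi] at *; linarith)

lemma Ffun_intInt {a R : ℝ} {Z : ℝ → ℝ} (hZc : Continuous Z)
    (hZne : ∀ x, 0 < x → Z x ≠ 0) (hR : 0 < R) {x : ℝ} (hx : 0 < x) :
    IntervalIntegrable (Ffun Z a) volume x (4 * R) := by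
  apply ((Ffun_contOn hZc hZne).mono ?_).intervalIntegrable
  exact Set.OrdConnected.uIcc_subset Set.ordConnected_Ioi hx (by simp; positivity)

lemma ufun_hasDerivAt {a R : ℝ} {Z : ℝ → ℝ} (hZc : Continuous Z)
    (hZne : ∀ x, 0 < x → Z x ≠ 0) (hR : 0 < R) {x : ℝ} (hx : 0 < x) :
    HasDerivAt (ufun Z a R) (-(Ffun Z a x)) x := by
  have hop : IsOpen (Ioi (0 : ℝ)) := isOpen_Ioi
  have hc := Ffun_contOn (a := a) hZc hZne
  exact intervalIntegral.integral_hasDerivAt_left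
    (Ffun_intInt hZc hZne hR hx)
    (hc.stronglyMeasurableAtFilter hop x hx)
    (hc.continuousAt (hop.mem_nhds hx))

lemma phi_hasDerivAt {a R : ℝ} {Z Z' : ℝ → ℝ}
    (hZ : ∀ x, HasDerivAt Z (Z' x) x) (hZc : Continuous Z)
    (hZne : ∀ x, 0 < x → Z x ≠ 0) (hR : 0 < R) {x : ℝ} (hx : 0 < x) :
    HasDerivAt (phiVar Z a R) (Z' x * ufun Z a R x + Z x * -(Ffun Z a x)) x := by
  have h : phiVar Z a R = fun y => Z y * ufun Z a R y := rfl
  rw [h]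
  exact (hZ x).mul (ufun_hasDerivAt hZc hZne hR hx)

lemma Ffun_hasDerivAt {a : ℝ} {Z Z' : ℝ → ℝ}
    (hZ : ∀ x, HasDerivAt Z (Z' x) x) (hZc : Continuous Z)
    (hZne : ∀ x, 0 < x → Z x ≠ 0) {x : ℝ} (hx : 0 < x) :
    HasDerivAt (Ffun Z a)
      ((0 * (x * Z x ^ 2) - 1 * (1 * Z x ^ 2 + x * (2 * Z x ^ 1 * Z' x))) / (x * Z x ^ 2) ^ 2
          * Ifun Z a x
        + 1 / (x * Z x ^ 2) * (gfun a x * Z x * x)) x := by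
  have hden : HasDerivAt (fun r => r * Z r ^ 2)
      (1 * Z x ^ 2 + x * (2 * Z x ^ 1 * Z' x)) x :=
    (hasDerivAt_id x).mul ((hZ x).pow 2)
  have hne : x * Z x ^ 2 ≠ 0 := mul_ne_zero (ne_of_gt hx) (pow_ne_zero 2 (hZne x hx))
  have hinv : HasDerivAt (fun r => 1 / (r * Z r ^ 2))
      ((0 * (x * Z x ^ 2) - 1 * (1 * Z x ^ 2 + x * (2 * Z x ^ 1 * Z' x)))
        / (x * Z x ^ 2) ^ 2) x :=
    (hasDerivAt_const x (1 : ℝ)).div hden hne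
  exact hinv.mul (Ifun_hasDerivAt hZc (by linarith))

lemma deriv_phi {a R : ℝ} {Z Z' : ℝ → ℝ}
    (hZ : ∀ x, HasDerivAt Z (Z' x) x) (hZc : Continuous Z)
    (hZne : ∀ x, 0 < x → Z x ≠ 0) (hR : 0 < R) {x : ℝ} (hx : 0 < x) :
    deriv (phiVar Z a R) x = Z' x * ufun Z a R x + Z x * -(Ffun Z a x) :=
  (phi_hasDerivAt hZ hZc hZne hR hx).deriv

lemma deriv2_phi {a R : ℝ} {Z Z' Z'' : ℝ → ℝ}
    (hZ : ∀ x, HasDerivAt Z (Z' x) x) (hZ2 : ∀ x, HasDerivAt Z' (Z'' x) x)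
    (hZc : Continuous Z) (hZne : ∀ x, 0 < x → Z x ≠ 0) (hR : 0 < R)
    {ρ : ℝ} (hρ : 0 < ρ) :
    deriv (deriv (phiVar Z a R)) ρ =
      Z'' ρ * ufun Z a R ρ + Z' ρ * -(Ffun Z a ρ)
      + (Z' ρ * -(Ffun Z a ρ)
        + Z ρ * -((0 * (ρ * Z ρ ^ 2) - 1 * (1 * Z ρ ^ 2 + ρ * (2 * Z ρ ^ 1 * Z' ρ)))
              / (ρ * Z ρ ^ 2) ^ 2 * Ifun Z a ρ
            + 1 / (ρ * Z ρ ^ 2) * (gfun a ρ * Z ρ * ρ))) := by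
  have hev : deriv (phiVar Z a R)
      =ᶠ[nhds ρ] (fun x => Z' x * ufun Z a R x + Z x * -(Ffun Z a x)) := by
    filter_upwards [isOpen_Ioi.mem_nhds (show ρ ∈ Ioi (0:ℝ) from hρ)] with x hx
    exact deriv_phi hZ hZc hZne hR hx
  rw [hev.deriv_eq]
  have h1 : HasDerivAt (fun x => Z' x * ufun Z a R x)
      (Z'' ρ * ufun Z a R ρ + Z' ρ * -(Ffun Z a ρ)) ρ :=
    (hZ2 ρ).mul (ufun_hasDerivAt hZc hZne hR hρ)
  have h2 : HasDerivAt (fun x => Z x * -(Ffun Z a x))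
      (Z' ρ * -(Ffun Z a ρ)
        + Z ρ * -((0 * (ρ * Z ρ ^ 2) - 1 * (1 * Z ρ ^ 2 + ρ * (2 * Z ρ ^ 1 * Z' ρ)))
              / (ρ * Z ρ ^ 2) ^ 2 * Ifun Z a ρ
            + 1 / (ρ * Z ρ ^ 2) * (gfun a ρ * Z ρ * ρ))) ρ :=
    (hZ ρ).mul (Ffun_hasDerivAt hZ hZc hZne hρ).neg
  exact (h1.add h2).deriv

/-! ### The explicit kernels and their derivatives -/

def Z0d (x : ℝ) : ℝ := (1 - x ^ 2) / (1 + x ^ 2) ^ 2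
def Z0dd (x : ℝ) : ℝ := (2 * x ^ 3 - 6 * x) / (1 + x ^ 2) ^ 3
def Z1d (x : ℝ) : ℝ := -2 * x / (1 + x ^ 2) ^ 2
def Z1dd (x : ℝ) : ℝ := (6 * x ^ 2 - 2) / (1 + x ^ 2) ^ 3

lemma hasDerivAt_one_add_sq (x : ℝ) :
    HasDerivAt (fun y : ℝ => 1 + y ^ 2) (2 * x) x := by
  simpa using (hasDerivAt_pow 2 x).const_add 1

lemma hasDerivAt_Z0 (x : ℝ) : HasDerivAt Z0 (Z0d x) x := by
  have hne : (1 : ℝ) + x ^ 2 ≠ 0 := by positivity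
  have h := (hasDerivAt_id x).fun_div (hasDerivAt_one_add_sq x) hne
  have h2 : Z0 = fun y : ℝ => y / (1 + y ^ 2) := rfl
  rw [h2]
  refine h.congr_deriv ?_
  simp only [id_eq]
  rw [Z0d]; ring

lemma hasDerivAt_Z0d (x : ℝ) : HasDerivAt Z0d (Z0dd x) x := by
  have hne : (1 : ℝ) + x ^ 2 ≠ 0 := by positivity
  have hnum : HasDerivAt (fun y : ℝ => 1 - y ^ 2) (-(2 * x)) x := by
    simpa using ((hasDerivAt_pow 2 x).const_sub 1)
  have hden : HasDerivAt (fun y : ℝ => (1 + y ^ 2) ^ 2)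
      (2 * (1 + x ^ 2) ^ 1 * (2 * x)) x := (hasDerivAt_one_add_sq x).pow 2
  have h := hnum.fun_div hden (by positivity)
  have h2 : Z0d = fun y : ℝ => (1 - y ^ 2) / (1 + y ^ 2) ^ 2 := rfl
  rw [h2]
  refine h.congr_deriv ?_
  rw [Z0dd]
  field_simp
  ring

lemma hasDerivAt_Z1 (x : ℝ) : HasDerivAt Z1 (Z1d x) x := by
  have hne : (1 : ℝ) + x ^ 2 ≠ 0 := by positivity
  have h := (hasDerivAt_const x (1 : ℝ)).fun_div (hasDerivAt_one_add_sq x) hne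
  have h2 : Z1 = fun y : ℝ => 1 / (1 + y ^ 2) := rfl
  rw [h2]
  refine h.congr_deriv ?_
  rw [Z1d]; ring

lemma hasDerivAt_Z1d (x : ℝ) : HasDerivAt Z1d (Z1dd x) x := by
  have hne : (1 : ℝ) + x ^ 2 ≠ 0 := by positivity
  have hnum : HasDerivAt (fun y : ℝ => -2 * y) (-2 : ℝ) x := by
    simpa using (hasDerivAt_id x).const_mul (-2 : ℝ)
  have hden : HasDerivAt (fun y : ℝ => (1 + y ^ 2) ^ 2)
      (2 * (1 + x ^ 2) ^ 1 * (2 * x)) x := (hasDerivAt_one_add_sq x).pow 2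
  have h := hnum.fun_div hden (by positivity)
  have h2 : Z1d = fun y : ℝ => -2 * y / (1 + y ^ 2) ^ 2 := rfl
  rw [h2]
  refine h.congr_deriv ?_
  rw [Z1dd]
  field_simp
  ring

lemma Z0_cont : Continuous Z0 := by
  apply Continuous.div continuous_id (by continuity)
  intro x; positivity

lemma Z1_cont : Continuous Z1 := by
  apply Continuous.div continuous_const (by continuity)
  intro x; positivity

lemma Z0_ne (x : ℝ) (hx : 0 < x) : Z0 x ≠ 0 := by
  rw [Z0]
  exact div_ne_zero (ne_of_gt hx) (by positivity)

lemma Z1_ne (x : ℝ) (hx : 0 < x) : Z1 x ≠ 0 := by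
  rw [Z1]
  exact div_ne_zero one_ne_zero (by positivity)

/-! ### The ODE identities -/

lemma mode0_eq (a R : ℝ) (hR : 0 < R) {ρ : ℝ} (hρ : 0 < ρ) :
    Lmode 0 (phiVar Z0 a R) ρ + gfun a ρ = 0 := by
  have hne : (1 : ℝ) + ρ ^ 2 ≠ 0 := by positivity
  rw [Lmode,
    deriv2_phi hasDerivAt_Z0 hasDerivAt_Z0d Z0_cont Z0_ne hR hρ,
    deriv_phi hasDerivAt_Z0 Z0_cont Z0_ne hR hρ,
    phiVar_eq, cos_two_wfun]
  set U := ufun Z0 a R ρ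
  set I := Ifun Z0 a ρ
  set G := gfun a ρ
  simp only [Ffun, Z0, Z0d, Z0dd]
  push_cast
  field_simp
  ring

lemma mode1_eq (a R : ℝ) (hR : 0 < R) {ρ : ℝ} (hρ : 0 < ρ) :
    Lmode 1 (phiVar Z1 a R) ρ + gfun a ρ = 0 := by
  have hne : (1 : ℝ) + ρ ^ 2 ≠ 0 := by positivity
  rw [Lmode,
    deriv2_phi hasDerivAt_Z1 hasDerivAt_Z1d Z1_cont Z1_ne hR hρ,
    deriv_phi hasDerivAt_Z1 Z1_cont Z1_ne hR hρ,
    phiVar_eq, cos_two_wfun, cos_wfun]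
  set U := ufun Z1 a R ρ
  set I := Ifun Z1 a ρ
  set G := gfun a ρ
  simp only [Ffun, Z1, Z1d, Z1dd]
  push_cast
  field_simp
  ring

lemma phi_boundary (Z : ℝ → ℝ) (a R : ℝ) : phiVar Z a R (4 * R) = 0 := by
  rw [phiVar_eq, ufun, intervalIntegral.integral_same, mul_zero]

/-! ### Bounds: basic facts about `gfun` -/

lemma gfun_nonneg {a s : ℝ} (hs : 0 ≤ s) : 0 ≤ gfun a s :=
  Real.rpow_nonneg (by linarith) _

lemma gfun_le_one {a s : ℝ} (ha : 0 ≤ a) (hs : 0 ≤ s) : gfun a s ≤ 1 :=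
  Real.rpow_le_one_of_one_le_of_nonpos (by linarith) (by linarith)

lemma Z0_nonneg {s : ℝ} (hs : 0 ≤ s) : 0 ≤ Z0 s := by
  rw [Z0]; positivity

lemma Z1_nonneg (s : ℝ) : 0 ≤ Z1 s := by
  rw [Z1]; positivity

lemma Ifun_nonneg {a : ℝ} {Z : ℝ → ℝ} (hZnn : ∀ s, 0 ≤ s → 0 ≤ Z s) {r : ℝ}
    (hr : 0 ≤ r) : 0 ≤ Ifun Z a r := by
  apply intervalIntegral.integral_nonneg hr
  intro s hs
  exact mul_nonneg (mul_nonneg (gfun_nonneg hs.1) (hZnn s hs.1)) hs.1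

lemma Ffun_nonneg {a : ℝ} {Z : ℝ → ℝ} (hZnn : ∀ s, 0 ≤ s → 0 ≤ Z s) {r : ℝ}
    (hr : 0 < r) : 0 ≤ Ffun Z a r := by
  rw [Ffun]
  apply mul_nonneg _ (Ifun_nonneg hZnn hr.le)
  positivity

lemma ufun_nonneg {a R : ℝ} {Z : ℝ → ℝ} (hZnn : ∀ s, 0 ≤ s → 0 ≤ Z s) {ρ : ℝ}
    (hρ : 0 < ρ) (hρ4 : ρ ≤ 4 * R) : 0 ≤ ufun Z a R ρ := by
  apply intervalIntegral.integral_nonneg hρ4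
  intro r hr
  exact Ffun_nonneg hZnn (lt_of_lt_of_le hρ hr.1)

/-- The integral `∫₀^r (1+s)^{-p} ds ≤ 1/(p-1)` for `p > 1`. -/
lemma integral_gfun_le {p r : ℝ} (hp : 1 < p) (hr : 0 ≤ r) :
    ∫ s in (0 : ℝ)..r, (1 + s) ^ (-p) ≤ 1 / (p - 1) := by
  have h1r : (1 : ℝ) ≤ 1 + r := by linarith
  have h1 : ∫ s in (0 : ℝ)..r, (1 + s) ^ (-p)
      = ∫ x in (1 : ℝ)..(1 + r), x ^ (-p) := by
    have := intervalIntegral.integral_comp_add_left (a := (0:ℝ)) (b := r)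
      (fun x : ℝ => x ^ (-p)) 1
    simpa using this
  have hnot : (0 : ℝ) ∉ Set.uIcc (1 : ℝ) (1 + r) := by
    rw [Set.uIcc_of_le h1r]
    intro h
    exact absurd h.1 (by norm_num)
  rw [h1, integral_rpow (Or.inr ⟨by intro h; rw [neg_eq_iff_eq_neg] at h; linarith,
    hnot⟩), Real.one_rpow]
  have hx : 0 ≤ (1 + r) ^ (-p + 1) := Real.rpow_nonneg (by linarith) _
  have he : ((1 + r) ^ (-p + 1) - 1) / (-p + 1)
      = (1 - (1 + r) ^ (-p + 1)) / (p - 1) := by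
    rw [show (-p + 1) = -(p - 1) by ring, div_neg]
    ring
  rw [he]
  gcongr
  · linarith

/-! ### Bounds for mode 0 -/

lemma I0_le_cube {a : ℝ} (ha : 0 ≤ a) {r : ℝ} (hr : 0 ≤ r) :
    Ifun Z0 a r ≤ r ^ 3 / 3 := by
  have hint := integrand_intInt (a := a) (c := 0) Z0_cont (by norm_num) (by linarith : (-1:ℝ) < r)
  have hint2 : IntervalIntegrable (fun s : ℝ => s ^ 2) volume 0 r :=
    (continuous_pow 2).intervalIntegrable 0 r
  have hmono := intervalIntegral.integral_mono_on hr hint hint2 ?_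
  · rw [integral_pow] at hmono
    calc Ifun Z0 a r ≤ (r ^ (2 + 1) - 0 ^ (2 + 1)) / ((2 : ℕ) + 1) := hmono
      _ = r ^ 3 / 3 := by norm_num
  · intro s hs
    have hs0 : 0 ≤ s := hs.1
    have h1 : gfun a s ≤ 1 := gfun_le_one ha hs0
    have h2 : Z0 s * s ≤ s ^ 2 := by
      rw [Z0, div_mul_eq_mul_div]
      calc s * s / (1 + s ^ 2) ≤ s * s := by
            apply div_le_self (mul_self_nonneg s); nlinarith
        _ = s ^ 2 := by ring
    calc gfun a s * Z0 s * s = gfun a s * (Z0 s * s) := by ring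
      _ ≤ 1 * s ^ 2 :=
          mul_le_mul h1 h2 (mul_nonneg (Z0_nonneg hs0) hs0) zero_le_one
      _ = s ^ 2 := one_mul _

lemma I0_le_const {a : ℝ} (ha : 1 < a) {r : ℝ} (hr : 0 ≤ r) :
    Ifun Z0 a r ≤ 1 / (a - 1) := by
  have hint := integrand_intInt (a := a) (c := 0) Z0_cont (by norm_num) (by linarith : (-1:ℝ) < r)
  have hint2 : IntervalIntegrable (fun s : ℝ => (1 + s) ^ (-a)) volume 0 r := by
    apply ((gfun_contOn (a := a)).mono ?_).intervalIntegrable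
    exact Set.OrdConnected.uIcc_subset Set.ordConnected_Ioi (by norm_num)
      (by simp; linarith)
  have hmono := intervalIntegral.integral_mono_on hr hint hint2 ?_
  · exact hmono.trans (integral_gfun_le ha hr)
  · intro s hs
    have hs0 : 0 ≤ s := hs.1
    have h2 : Z0 s * s ≤ 1 := by
      rw [Z0, div_mul_eq_mul_div, div_le_one (by positivity)]
      nlinarith
    calc gfun a s * Z0 s * s = gfun a s * (Z0 s * s) := by ring
      _ ≤ gfun a s * 1 := by
          apply mul_le_mul_of_nonneg_left h2 (gfun_nonneg hs0)
      _ = (1 + s) ^ (-a) := by rw [mul_one]; rfl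

lemma F0_le {a : ℝ} (ha : 1 < a) {r : ℝ} (hr : 0 < r) :
    Ffun Z0 a r ≤ 4 / 3 + 4 * (a - 1)⁻¹ * r := by
  have hne : (1 : ℝ) + r ^ 2 ≠ 0 := by positivity
  have hanz : (0 : ℝ) < a - 1 := by linarith
  have hc : (1 : ℝ) / (r * Z0 r ^ 2) = (1 + r ^ 2) ^ 2 / r ^ 3 := by
    rw [Z0]; field_simp
  have hcpos : (0 : ℝ) ≤ (1 + r ^ 2) ^ 2 / r ^ 3 := by positivity
  rw [Ffun, hc]
  rcases le_or_gt r 1 with h1 | h1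
  · have hstep : (1 + r ^ 2) ^ 2 / r ^ 3 * Ifun Z0 a r
        ≤ (1 + r ^ 2) ^ 2 / r ^ 3 * (r ^ 3 / 3) :=
      mul_le_mul_of_nonneg_left (I0_le_cube (by linarith) hr.le) hcpos
    have heq : (1 + r ^ 2) ^ 2 / r ^ 3 * (r ^ 3 / 3) = (1 + r ^ 2) ^ 2 / 3 := by
      field_simp
    have hr2 : r ^ 2 ≤ 1 := by nlinarith [mul_nonneg (sub_nonneg.mpr h1) hr.le]
    have h4 : (1 + r ^ 2) ^ 2 ≤ 4 := by
      nlinarith [mul_nonneg (sub_nonneg.mpr hr2) (sq_nonneg r)]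
    have hpos : (0 : ℝ) ≤ 4 * (a - 1)⁻¹ * r := by positivity
    calc (1 + r ^ 2) ^ 2 / r ^ 3 * Ifun Z0 a r
        ≤ (1 + r ^ 2) ^ 2 / r ^ 3 * (r ^ 3 / 3) := hstep
      _ = (1 + r ^ 2) ^ 2 / 3 := heq
      _ ≤ 4 / 3 := by linarith
      _ ≤ 4 / 3 + 4 * (a - 1)⁻¹ * r := by linarith
  · have hr2 : (1 : ℝ) ≤ r ^ 2 := by nlinarith
    have h3 : (1 + r ^ 2) ^ 2 / r ^ 3 ≤ 4 * r := by
      rw [div_le_iff₀ (by positivity)]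
      nlinarith [mul_nonneg (sub_nonneg.mpr hr2) (by positivity : (0:ℝ) ≤ 3 * r ^ 2 + 1)]
    calc (1 + r ^ 2) ^ 2 / r ^ 3 * Ifun Z0 a r
        ≤ (1 + r ^ 2) ^ 2 / r ^ 3 * (1 / (a - 1)) :=
          mul_le_mul_of_nonneg_left (I0_le_const ha hr.le) hcpos
      _ ≤ (4 * r) * (1 / (a - 1)) := by
          apply mul_le_mul_of_nonneg_right h3 (by positivity)
      _ = 4 * (a - 1)⁻¹ * r := by rw [one_div]; ring
      _ ≤ 4 / 3 + 4 * (a - 1)⁻¹ * r := by linarith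

lemma u0_le {a R : ℝ} (ha : 1 < a) (hR : 2 ≤ R) {ρ : ℝ} (hρ : 0 < ρ)
    (hρ4 : ρ ≤ 4 * R) :
    ufun Z0 a R ρ ≤ (16 / 3 + 32 * (a - 1)⁻¹) * R ^ 2 := by
  have hR0 : (0 : ℝ) < R := by linarith
  have hanz : (0 : ℝ) < a - 1 := by linarith
  have hintF := Ffun_intInt (a := a) Z0_cont Z0_ne hR0 hρ
  have hintB : IntervalIntegrable (fun r : ℝ => 4 / 3 + 4 * (a - 1)⁻¹ * r)
      volume ρ (4 * R) := (by fun_prop : Continuous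
        (fun r : ℝ => 4 / 3 + 4 * (a - 1)⁻¹ * r)).intervalIntegrable _ _
  have h1 := intervalIntegral.integral_mono_on hρ4 hintF hintB
    (fun r hr => F0_le ha (lt_of_lt_of_le hρ hr.1))
  have h2 : ∫ r in ρ..(4 * R), (4 / 3 + 4 * (a - 1)⁻¹ * r)
      = 4 / 3 * (4 * R - ρ) + 4 * (a - 1)⁻¹ * (((4 * R) ^ 2 - ρ ^ 2) / 2) := by
    rw [intervalIntegral.integral_add (intervalIntegrable_const)
      ((by fun_prop : Continuous (fun r : ℝ => 4 * (a - 1)⁻¹ * r)).intervalIntegrable _ _),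
      intervalIntegral.integral_const, intervalIntegral.integral_const_mul,
      integral_id]
    simp [smul_eq_mul]
    ring
  have h3 : 4 / 3 * (4 * R - ρ) + 4 * (a - 1)⁻¹ * (((4 * R) ^ 2 - ρ ^ 2) / 2)
      ≤ (16 / 3 + 32 * (a - 1)⁻¹) * R ^ 2 := by
    have hinv : (0 : ℝ) < (a - 1)⁻¹ := by positivity
    have hRR : R ≤ R ^ 2 := by nlinarith [mul_nonneg (show (0:ℝ) ≤ R - 1 by linarith) (show (0:ℝ) ≤ R by linarith)]
    nlinarith [mul_nonneg hinv.le (sq_nonneg ρ), mul_nonneg hinv.le (sq_nonneg R)]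
  calc ufun Z0 a R ρ ≤ _ := h1
    _ ≤ _ := by rw [h2] at *; linarith

lemma bound0 {a R : ℝ} (ha : 1 < a) (hR : 2 ≤ R) {ρ : ℝ} (hρ : 0 < ρ)
    (hρ4 : ρ ≤ 4 * R) :
    |phiVar Z0 a R ρ| ≤ (2 * (16 / 3 + 32 * (a - 1)⁻¹)) * (1 + ρ)⁻¹ * R ^ 2 := by
  have hu0 : 0 ≤ ufun Z0 a R ρ := ufun_nonneg (fun s hs => Z0_nonneg hs) hρ hρ4
  have hZnn : 0 ≤ Z0 ρ := Z0_nonneg hρ.le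
  rw [phiVar_eq, abs_of_nonneg (mul_nonneg hZnn hu0)]
  have hZle : Z0 ρ ≤ 2 * (1 + ρ)⁻¹ := by
    rw [Z0, show (2:ℝ) * (1 + ρ)⁻¹ = 2 / (1 + ρ) from by rw [div_eq_mul_inv],
      div_le_div_iff₀ (by positivity) (by positivity)]
    nlinarith [sq_nonneg (ρ - 1)]
  calc Z0 ρ * ufun Z0 a R ρ
      ≤ (2 * (1 + ρ)⁻¹) * ((16 / 3 + 32 * (a - 1)⁻¹) * R ^ 2) := by
        apply mul_le_mul hZle (u0_le ha hR hρ hρ4) hu0 (by positivity)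
    _ = (2 * (16 / 3 + 32 * (a - 1)⁻¹)) * (1 + ρ)⁻¹ * R ^ 2 := by ring

/-! ### Bounds for mode 1 -/

lemma I1_le_sq {a : ℝ} (ha : 0 ≤ a) {r : ℝ} (hr : 0 ≤ r) :
    Ifun Z1 a r ≤ r ^ 2 / 2 := by
  have hint := integrand_intInt (a := a) (c := 0) Z1_cont (by norm_num) (by linarith : (-1:ℝ) < r)
  have hint2 : IntervalIntegrable (fun s : ℝ => s) volume 0 r :=
    continuous_id.intervalIntegrable 0 r
  have hmono := intervalIntegral.integral_mono_on hr hint hint2 ?_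
  · rw [integral_id] at hmono
    calc Ifun Z1 a r ≤ (r ^ 2 - 0 ^ 2) / 2 := hmono
      _ = r ^ 2 / 2 := by norm_num
  · intro s hs
    have hs0 : 0 ≤ s := hs.1
    have h1 : gfun a s ≤ 1 := gfun_le_one ha hs0
    have h2 : Z1 s ≤ 1 := by
      rw [Z1, div_le_one (by positivity)]; nlinarith
    calc gfun a s * Z1 s * s ≤ 1 * 1 * s := by
          apply mul_le_mul_of_nonneg_right _ hs0
          exact mul_le_mul h1 h2 (Z1_nonneg s) zero_le_one
      _ = s := by ring

lemma I1_le_const {a : ℝ} (ha : 0 < a) (ha2 : a < 2) {r : ℝ} (hr : 0 ≤ r) :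
    Ifun Z1 a r ≤ 2 * a⁻¹ := by
  have hint := integrand_intInt (a := a) (c := 0) Z1_cont (by norm_num) (by linarith : (-1:ℝ) < r)
  have hcont2 : ContinuousOn (fun s : ℝ => 2 * (1 + s) ^ (-(a + 1)))
      (Ioi (-1 : ℝ)) := (continuousOn_const.mul (gfun_contOn (a := a + 1)))
  have hint2 : IntervalIntegrable (fun s : ℝ => 2 * (1 + s) ^ (-(a + 1))) volume 0 r := by
    apply (hcont2.mono ?_).intervalIntegrable
    exact Set.OrdConnected.uIcc_subset Set.ordConnected_Ioi (by norm_num) (by simp; linarith)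
  have hmono := intervalIntegral.integral_mono_on hr hint hint2 ?_
  · have hcalc : ∫ s in (0 : ℝ)..r, 2 * (1 + s) ^ (-(a + 1))
        ≤ 2 * (1 / (a + 1 - 1)) := by
      rw [intervalIntegral.integral_const_mul]
      have := integral_gfun_le (p := a + 1) (by linarith) hr
      linarith
    calc Ifun Z1 a r ≤ _ := hmono
      _ ≤ 2 * (1 / (a + 1 - 1)) := hcalc
      _ = 2 * a⁻¹ := by rw [one_div]; ring_nf
  · intro s hs
    have hs0 : 0 ≤ s := hs.1
    have hgnn : 0 ≤ gfun a s := gfun_nonneg hs0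
    have hkey : Z1 s * s ≤ 2 * (1 + s)⁻¹ := by
      rw [Z1, show (2:ℝ) * (1 + s)⁻¹ = 2 / (1 + s) from by rw [div_eq_mul_inv],
        div_mul_eq_mul_div, one_mul, div_le_div_iff₀ (by positivity) (by positivity)]
      nlinarith [sq_nonneg (s - 1)]
    have hsplit : (1 + s) ^ (-(a + 1)) = (1 + s) ^ (-a) * (1 + s)⁻¹ := by
      rw [show -(a + 1) = -a + (-1) by ring,
        Real.rpow_add (by linarith : (0:ℝ) < 1 + s), Real.rpow_neg_one]
    calc gfun a s * Z1 s * s = gfun a s * (Z1 s * s) := by ring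
      _ ≤ gfun a s * (2 * (1 + s)⁻¹) := mul_le_mul_of_nonneg_left hkey hgnn
      _ = 2 * ((1 + s) ^ (-a) * (1 + s)⁻¹) := by rw [gfun]; ring
      _ = 2 * (1 + s) ^ (-(a + 1)) := by rw [hsplit]

lemma F1_le {a : ℝ} (ha : 0 < a) (ha2 : a < 2) {r : ℝ} (hr : 0 < r) :
    Ffun Z1 a r ≤ 2 + 8 * a⁻¹ * r ^ 3 := by
  have hne : (1 : ℝ) + r ^ 2 ≠ 0 := by positivity
  have hc : (1 : ℝ) / (r * Z1 r ^ 2) = (1 + r ^ 2) ^ 2 / r := by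
    rw [Z1]; field_simp
  have hcpos : (0 : ℝ) ≤ (1 + r ^ 2) ^ 2 / r := by positivity
  rw [Ffun, hc]
  rcases le_or_gt r 1 with h1 | h1
  · have hstep : (1 + r ^ 2) ^ 2 / r * Ifun Z1 a r
        ≤ (1 + r ^ 2) ^ 2 / r * (r ^ 2 / 2) :=
      mul_le_mul_of_nonneg_left (I1_le_sq ha.le hr.le) hcpos
    have heq : (1 + r ^ 2) ^ 2 / r * (r ^ 2 / 2) = r * (1 + r ^ 2) ^ 2 / 2 := by
      field_simp
    have hr2 : r ^ 2 ≤ 1 := by nlinarith [mul_nonneg (sub_nonneg.mpr h1) hr.le]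
    have h4 : (1 + r ^ 2) ^ 2 ≤ 4 := by
      nlinarith [mul_nonneg (sub_nonneg.mpr hr2) (sq_nonneg r)]
    have h5 : r * (1 + r ^ 2) ^ 2 ≤ 1 * 4 :=
      mul_le_mul h1 h4 (by positivity) (by norm_num)
    have hpos : (0 : ℝ) ≤ 8 * a⁻¹ * r ^ 3 := by positivity
    calc (1 + r ^ 2) ^ 2 / r * Ifun Z1 a r
        ≤ (1 + r ^ 2) ^ 2 / r * (r ^ 2 / 2) := hstep
      _ = r * (1 + r ^ 2) ^ 2 / 2 := heq
      _ ≤ 2 := by linarith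
      _ ≤ 2 + 8 * a⁻¹ * r ^ 3 := by linarith
  · have hr2 : (1 : ℝ) ≤ r ^ 2 := by nlinarith
    have h3 : (1 + r ^ 2) ^ 2 / r ≤ 4 * r ^ 3 := by
      rw [div_le_iff₀ (by positivity)]
      nlinarith [mul_nonneg (sub_nonneg.mpr hr2) (by positivity : (0:ℝ) ≤ 3 * r ^ 2 + 1)]
    calc (1 + r ^ 2) ^ 2 / r * Ifun Z1 a r
        ≤ (1 + r ^ 2) ^ 2 / r * (2 * a⁻¹) :=
          mul_le_mul_of_nonneg_left (I1_le_const ha ha2 hr.le) hcpos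
      _ ≤ (4 * r ^ 3) * (2 * a⁻¹) := by
          apply mul_le_mul_of_nonneg_right h3 (by positivity)
      _ = 8 * a⁻¹ * r ^ 3 := by ring
      _ ≤ 2 + 8 * a⁻¹ * r ^ 3 := by linarith

lemma u1_le {a R : ℝ} (ha : 0 < a) (ha2 : a < 2) (hR : 2 ≤ R) {ρ : ℝ} (hρ : 0 < ρ)
    (hρ4 : ρ ≤ 4 * R) :
    ufun Z1 a R ρ ≤ (8 + 512 * a⁻¹) * R ^ 4 := by
  have hR0 : (0 : ℝ) < R := by linarith
  have hintF := Ffun_intInt (a := a) Z1_cont Z1_ne hR0 hρ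
  have hintB : IntervalIntegrable (fun r : ℝ => 2 + 8 * a⁻¹ * r ^ 3)
      volume ρ (4 * R) := (by fun_prop : Continuous
        (fun r : ℝ => 2 + 8 * a⁻¹ * r ^ 3)).intervalIntegrable _ _
  have h1 := intervalIntegral.integral_mono_on hρ4 hintF hintB
    (fun r hr => F1_le ha ha2 (lt_of_lt_of_le hρ hr.1))
  have h2 : ∫ r in ρ..(4 * R), (2 + 8 * a⁻¹ * r ^ 3)
      = 2 * (4 * R - ρ) + 8 * a⁻¹ * (((4 * R) ^ 4 - ρ ^ 4) / 4) := by
    rw [intervalIntegral.integral_add (intervalIntegrable_const)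
      ((by fun_prop : Continuous (fun r : ℝ => 8 * a⁻¹ * r ^ 3)).intervalIntegrable _ _),
      intervalIntegral.integral_const, intervalIntegral.integral_const_mul,
      integral_pow]
    simp [smul_eq_mul]
    ring
  have h3 : 2 * (4 * R - ρ) + 8 * a⁻¹ * (((4 * R) ^ 4 - ρ ^ 4) / 4)
      ≤ (8 + 512 * a⁻¹) * R ^ 4 := by
    have hinv : (0 : ℝ) < a⁻¹ := by positivity
    have e0 : (0:ℝ) ≤ (R - 1) * R ^ 3 := mul_nonneg (by linarith) (by positivity)
    have e1 : (0:ℝ) ≤ (R - 1) * R ^ 2 := mul_nonneg (by linarith) (by positivity)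
    have e2 : (0:ℝ) ≤ (R - 1) * R := mul_nonneg (by linarith) (by linarith)
    have hRR : R ≤ R ^ 4 := by nlinarith [e0, e1, e2]
    nlinarith [mul_nonneg hinv.le (pow_nonneg hρ.le 4)]
  calc ufun Z1 a R ρ ≤ _ := h1
    _ ≤ _ := by rw [h2] at *; linarith

lemma bound1 {a R : ℝ} (ha : 0 < a) (ha2 : a < 2) (hR : 2 ≤ R) {ρ : ℝ} (hρ : 0 < ρ)
    (hρ4 : ρ ≤ 4 * R) :
    |phiVar Z1 a R ρ| ≤ (2 * (8 + 512 * a⁻¹)) * (1 + ρ) ^ (-(2 : ℝ)) * R ^ 4 := by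
  have hu0 : 0 ≤ ufun Z1 a R ρ := ufun_nonneg (fun s _ => Z1_nonneg s) hρ hρ4
  have hZnn : 0 ≤ Z1 ρ := Z1_nonneg ρ
  have hrpow : (1 + ρ) ^ (-(2 : ℝ)) = ((1 + ρ) ^ 2)⁻¹ := by
    rw [Real.rpow_neg (by linarith), Real.rpow_two]
  rw [phiVar_eq, abs_of_nonneg (mul_nonneg hZnn hu0), hrpow]
  have hZle : Z1 ρ ≤ 2 * ((1 + ρ) ^ 2)⁻¹ := by
    rw [Z1, show (2:ℝ) * ((1 + ρ) ^ 2)⁻¹ = 2 / (1 + ρ) ^ 2 from by rw [div_eq_mul_inv],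
      div_le_div_iff₀ (by positivity) (by positivity)]
    nlinarith [sq_nonneg (ρ - 1)]
  calc Z1 ρ * ufun Z1 a R ρ
      ≤ (2 * ((1 + ρ) ^ 2)⁻¹) * ((8 + 512 * a⁻¹) * R ^ 4) := by
        apply mul_le_mul hZle (u1_le ha ha2 hR hρ hρ4) hu0 (by positivity)
    _ = (2 * (8 + 512 * a⁻¹)) * ((1 + ρ) ^ 2)⁻¹ * R ^ 4 := by ring

end Barrier

open Barrier

/-- The variation-of-parameters solutions at modes `0` and `1` solve `ℒ_k[φ^k] + g = 0`
on `(0, 4R)`, vanish at `4R`, and satisfy the stated weighted bounds with a constant `C`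
depending only on `a`. -/
theorem mode_zero_and_one_barriers (a : ℝ) :
    ∃ C > 0, ∀ R : ℝ, 2 ≤ R →
      (∀ ρ : ℝ, 0 < ρ → ρ < 4 * R → Lmode 0 (phiVar Z0 a R) ρ + gfun a ρ = 0) ∧
      phiVar Z0 a R (4 * R) = 0 ∧
      (∀ ρ : ℝ, 0 < ρ → ρ < 4 * R → Lmode 1 (phiVar Z1 a R) ρ + gfun a ρ = 0) ∧
      phiVar Z1 a R (4 * R) = 0 ∧
      (1 < a → a < 2 →
        ∀ ρ : ℝ, 0 < ρ → ρ ≤ 4 * R → |phiVar Z0 a R ρ| ≤ C * (1 + ρ)⁻¹ * R ^ 2) ∧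
      (0 < a → a < 2 →
        ∀ ρ : ℝ, 0 < ρ → ρ ≤ 4 * R → |phiVar Z1 a R ρ| ≤ C * (1 + ρ)^(-(2:ℝ)) * R ^ 4) := by
  refine ⟨2 * (16 / 3 + 32 * |(a - 1)⁻¹|) + 2 * (8 + 512 * |a⁻¹|) + 1, by positivity,
    fun R hR => ?_⟩
  have hR0 : (0 : ℝ) < R := by linarith
  refine ⟨fun ρ hρ _ => mode0_eq a R hR0 hρ, phi_boundary Z0 a R,
    fun ρ hρ _ => mode1_eq a R hR0 hρ, phi_boundary Z1 a R, ?_, ?_⟩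
  · intro ha1 _ ρ hρ hρ4
    refine (bound0 ha1 hR hρ hρ4).trans ?_
    have habs : |(a - 1)⁻¹| = (a - 1)⁻¹ := abs_of_pos (inv_pos.mpr (by linarith))
    have hC : 2 * (16 / 3 + 32 * (a - 1)⁻¹)
        ≤ 2 * (16 / 3 + 32 * |(a - 1)⁻¹|) + 2 * (8 + 512 * |a⁻¹|) + 1 := by
      rw [habs]
      linarith [abs_nonneg (a⁻¹)]
    have h1 : (0 : ℝ) ≤ (1 + ρ)⁻¹ := by positivity
    have h2 : (0 : ℝ) ≤ R ^ 2 := by positivity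
    exact mul_le_mul_of_nonneg_right (mul_le_mul_of_nonneg_right hC h1) h2
  · intro ha0 ha2 ρ hρ hρ4
    refine (bound1 ha0 ha2 hR hρ hρ4).trans ?_
    have habs : |a⁻¹| = a⁻¹ := abs_of_pos (inv_pos.mpr ha0)
    have hC : 2 * (8 + 512 * a⁻¹)
        ≤ 2 * (16 / 3 + 32 * |(a - 1)⁻¹|) + 2 * (8 + 512 * |a⁻¹|) + 1 := by
      rw [habs]
      linarith [abs_nonneg ((a - 1)⁻¹)]
    have h1 : (0 : ℝ) ≤ (1 + ρ) ^ (-(2 : ℝ)) := Real.rpow_nonneg (by linarith) _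
    have h2 : (0 : ℝ) ≤ R ^ 4 := by positivity
    exact mul_le_mul_of_nonneg_right (mul_le_mul_of_nonneg_right hC h1) h2
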